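/- Regularity consequence of the weak formulation: If (v, A) is a weak solution of the free boundary problem (under the structural assumptions and initial condition assumption), then the functions t ↦ I_t, t ↦ C_t and t ↦ A_t are continuously differentiable on (0,∞), and for all t > 0 they satisfy I'_t = v(t, A_t) γ(t, C_t) σ(t, A_t)² and A'_t = α ∫_{t−d̄}^t ϱ(t−s) I'_s ds. -/

import Mathlib

open MeasureTheory Set Filter Topology

/-- The infected proportion `I_t = 1 - ∫_{A_t}^∞ v(t,x) dx`, with the convention
`I_s = 0` for `s ≤ 0`. -/
noncomputable def Ifun (v : ℝ → ℝ → ℝ) (A : ℝ → ℝ) (t : ℝ) : ℝ :=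
  if t ≤ 0 then 0 else 1 - ∫ x in Ici (A t), v t x

/-- The current contagiousness `C_t = ∫_{t-d̄}^t ϱ(t-s)(I_s - I_{s-d̄}) ds`. -/
noncomputable def Cfun (ϱ : ℝ → ℝ) (dbar : ℝ) (v : ℝ → ℝ → ℝ) (A : ℝ → ℝ) (t : ℝ) : ℝ :=
  ∫ s in (t - dbar)..t, ϱ (t - s) * (Ifun v A s - Ifun v A (s - dbar))

/-- Structural conditions (Assumption 2.1) on the coefficients `b, σ, γ, ϱ`. -/
def StructuralAssumptions (b σ γ : ℝ → ℝ → ℝ) (ϱ : ℝ → ℝ) (dbar : ℝ) : Prop :=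
  Measurable (Function.uncurry b) ∧ Measurable (Function.uncurry σ) ∧
  Measurable (Function.uncurry γ) ∧
  -- b : Lipschitz in x uniformly in t ∈ [0,T], with at most linear growth
  (∀ T > (0 : ℝ), ∃ K > (0 : ℝ),
    (∀ t ∈ Icc (0 : ℝ) T, LipschitzWith (Real.toNNReal K) (b t)) ∧
    (∀ t ∈ Icc (0 : ℝ) T, ∀ x : ℝ, |b t x| ≤ K * (1 + |x|))) ∧
  -- σ : non-degenerate, bounded, jointly Lipschitz
  (∀ T > (0 : ℝ), ∃ κ K : ℝ, 0 < κ ∧ κ ≤ K ∧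
    LipschitzOnWith (Real.toNNReal K) (Function.uncurry σ)
      (Icc (0 : ℝ) T ×ˢ (univ : Set ℝ)) ∧
    (∀ t ∈ Icc (0 : ℝ) T, ∀ x : ℝ, κ ≤ σ t x ∧ σ t x ≤ K)) ∧
  -- γ : C¹ jointly, Lipschitz in x uniformly in t, bounded away from zero
  (∀ T > (0 : ℝ), ∃ K κγ : ℝ, 0 < κγ ∧
    ContDiffOn ℝ 1 (Function.uncurry γ) (Icc (0 : ℝ) T ×ˢ (univ : Set ℝ)) ∧
    (∀ t ∈ Icc (0 : ℝ) T, LipschitzWith (Real.toNNReal K) (γ t)) ∧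
    (∀ t ∈ Icc (0 : ℝ) T, ∀ x : ℝ, κγ ≤ γ t x)) ∧
  -- ϱ : right-continuous, of bounded variation, non-negative, unit integral
  (∀ s ∈ Icc (0 : ℝ) dbar, ContinuousWithinAt ϱ (Ici s) s) ∧
  BoundedVariationOn ϱ (Icc 0 dbar) ∧
  (∀ s ∈ Icc (0 : ℝ) dbar, 0 ≤ ϱ s) ∧
  (∫ s in (0 : ℝ)..dbar, ϱ s) = 1

/-- Assumptions on the initial condition (Assumption 2.2): `P₀` is a probability
measure on `[a₀, ∞)` with a Gaussian moment. -/
def InitialCondition (a₀ : ℝ) (P₀ : Measure ℝ) : Prop :=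
  IsProbabilityMeasure P₀ ∧ P₀ (Iio a₀) = 0 ∧
  ∃ c > (0 : ℝ), Integrable (fun x => Real.exp (c * x ^ 2)) P₀

/-- Weak solution `(v, A)` of the free boundary problem (Definition 2.3). -/
def IsWeakSolution (b σ γ : ℝ → ℝ → ℝ) (ϱ : ℝ → ℝ) (dbar α a₀ : ℝ)
    (P₀ : Measure ℝ) (v : ℝ → ℝ → ℝ) (A : ℝ → ℝ) : Prop :=
  -- (i) A is continuous with A₀ = a₀
  Continuous A ∧ A 0 = a₀ ∧
  -- (ii) v ≥ 0, jointly continuous in t > 0 and x ≥ A_t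
  (∀ t x : ℝ, 0 ≤ v t x) ∧
  ContinuousOn (fun p : ℝ × ℝ => v p.1 p.2) {p : ℝ × ℝ | 0 < p.1 ∧ A p.1 ≤ p.2} ∧
  -- (iii) integrability
  (∀ t > (0 : ℝ), IntegrableOn (v t) (Ici (A t))) ∧
  (∀ t > (0 : ℝ), IntegrableOn (fun s => v s (A s)) (Icc 0 t)) ∧
  -- (iv) v(t,x) dx → P₀ weakly as t ↓ 0
  (∀ φ : ℝ → ℝ, Continuous φ → (∃ M, ∀ x, |φ x| ≤ M) →
    Tendsto (fun t => ∫ x in Ici (A t), φ x * v t x) (𝓝[>] (0 : ℝ))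
      (𝓝 (∫ x, φ x ∂P₀))) ∧
  -- the defining relation for the moving boundary A
  (∀ t > (0 : ℝ), A t = a₀ + α * ∫ s in (t - dbar)..t, ϱ (t - s) * Ifun v A s) ∧
  -- (v) the weak formulation for all t ≥ 0 and all φ ∈ C²_b(ℝ)
  (∀ t ≥ (0 : ℝ), ∀ φ : ℝ → ℝ, ContDiff ℝ 2 φ →
    (∃ M, ∀ x : ℝ, |φ x| ≤ M ∧ |deriv φ x| ≤ M ∧ |deriv (deriv φ) x| ≤ M) →
    (∫ x in Ici (A t), φ x * v t x) - (∫ x, φ x ∂P₀) =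
      (∫ s in (0 : ℝ)..t, ∫ x in Ici (A s),
          deriv (deriv φ) x * (1 / 2 * (σ s x) ^ 2 * v s x))
      + (∫ s in (0 : ℝ)..t, ∫ x in Ici (A s), deriv φ x * (b s x * v s x))
      + (∫ s in (0 : ℝ)..t,
          (1 / 2 * deriv φ (A s) - γ s (Cfun ϱ dbar v A s) * φ (A s))
            * (σ s (A s)) ^ 2 * v s (A s)))


lemma measurable_indicator_of_continuousOn' {X : Type*} [TopologicalSpace X]
    [MeasurableSpace X] [OpensMeasurableSpace X] {f : X → ℝ} {s : Set X}
    (hs : MeasurableSet s) (hf : ContinuousOn f s) : Measurable (s.indicator f) := by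
  classical
  intro B hB
  have hres : Measurable (s.restrict f) :=
    (continuousOn_iff_continuous_restrict.1 hf).measurable
  have key : s.indicator f ⁻¹' B =
      (Subtype.val '' (s.restrict f ⁻¹' B)) ∪ (if (0:ℝ) ∈ B then sᶜ else ∅) := by
    ext x
    by_cases hx : x ∈ s
    · simp only [mem_preimage, Set.indicator_of_mem hx, mem_union, mem_image, Subtype.exists,
        Set.restrict_apply, exists_and_right, exists_eq_right]
      constructor
      · intro h; exact Or.inl ⟨hx, h⟩
      · rintro (⟨hy, h⟩ | h)
        · exact h
        · split_ifs at h with h0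
          · exact absurd hx (Set.notMem_of_mem_compl h)
          · exact absurd h (notMem_empty x)
    · simp only [mem_preimage, Set.indicator_of_notMem hx, mem_union, mem_image,
        Subtype.exists, Set.restrict_apply, exists_and_right, exists_eq_right]
      constructor
      · intro h0
        right
        simp only [if_pos h0]
        exact hx
      · rintro (⟨hy, _⟩ | h)
        · exact absurd hy hx
        · split_ifs at h with h0
          · exact h0
          · exact absurd h (notMem_empty x)
  rw [key]
  refine (((MeasurableEmbedding.subtype_coe hs).measurableSet_image.2 (hres hB))).union ?_
  split_ifs
  · exact hs.compl
  · exact MeasurableSet.empty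

/-- Regularity consequence of the weak formulation: if `(v, A)` is a weak solution
of the free boundary problem, then `t ↦ I_t`, `t ↦ C_t` and `t ↦ A_t` are
continuously differentiable on `(0,∞)`, with
`I'_t = v(t, A_t) γ(t, C_t) σ(t, A_t)²` and
`A'_t = α ∫_{t-d̄}^t ϱ(t-s) I'_s ds` for all `t > 0`
(where `I'_s = 0` for `s ≤ 0`). -/
theorem weak_solution_boundary_regularity
    (b σ γ : ℝ → ℝ → ℝ) (ϱ : ℝ → ℝ) (dbar α a₀ : ℝ)
    (hdbar : 0 < dbar) (hα : 0 < α) (P₀ : Measure ℝ)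
    (hstruct : StructuralAssumptions b σ γ ϱ dbar)
    (hinit : InitialCondition a₀ P₀)
    (v : ℝ → ℝ → ℝ) (A : ℝ → ℝ)
    (hsol : IsWeakSolution b σ γ ϱ dbar α a₀ P₀ v A) :
    ∃ I' C' A' : ℝ → ℝ,
      (∀ s ≤ (0 : ℝ), I' s = 0) ∧
      ContinuousOn I' (Ioi 0) ∧ ContinuousOn C' (Ioi 0) ∧ ContinuousOn A' (Ioi 0) ∧
      (∀ t > (0 : ℝ),
        HasDerivAt (Ifun v A) (I' t) t ∧
        HasDerivAt (Cfun ϱ dbar v A) (C' t) t ∧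
        HasDerivAt A (A' t) t ∧
        I' t = v t (A t) * γ t (Cfun ϱ dbar v A t) * (σ t (A t)) ^ 2 ∧
        A' t = α * ∫ s in (t - dbar)..t, ϱ (t - s) * I' s) := by
  classical
  obtain ⟨hbm, hσm, hγm, hblin, hσs, hγs, hϱrc, hϱbv, hϱnn, hϱint⟩ := hstruct
  obtain ⟨hAc, hA0, hv0, hvc, hvint, hvAint, hlim, hAeq, hweak⟩ := hsol
  haveI hP : IsProbabilityMeasure P₀ := hinit.1
  -- the clamped kernel
  set cl : ℝ → ℝ := fun x => min dbar (max 0 x) with hcl_def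
  have hclmono : Monotone cl := monotone_const.min (monotone_const.max monotone_id)
  have hclmem : ∀ x, cl x ∈ Icc (0:ℝ) dbar := fun x =>
    ⟨le_min hdbar.le (le_max_left 0 x), min_le_left _ _⟩
  have hcleq : ∀ x ∈ Icc (0:ℝ) dbar, cl x = x := fun x hx => by
    simp only [hcl_def]; rw [max_eq_right hx.1, min_eq_right hx.2]
  set ϱh : ℝ → ℝ := fun x => ϱ (cl x) with hϱh_def
  have hϱh_agree : ∀ x ∈ Icc (0:ℝ) dbar, ϱh x = ϱ x := fun x hx => by
    simp only [hϱh_def]; rw [hcleq x hx]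
  -- monotone decomposition of the clamped kernel
  have h0mem : (0:ℝ) ∈ Icc (0:ℝ) dbar := ⟨le_refl 0, hdbar.le⟩
  set V : ℝ → ℝ := fun x => variationOnFromTo ϱ (Icc 0 dbar) 0 (cl x) with hV_def
  set W : ℝ → ℝ := fun x =>
    (variationOnFromTo ϱ (Icc 0 dbar) 0 - ϱ) (cl x) with hW_def
  have hVmono : Monotone V :=
    fun x y hxy => (variationOnFromTo.monotoneOn hϱbv.locallyBoundedVariationOn h0mem)
      (hclmem x) (hclmem y) (hclmono hxy)
  have hWmono : Monotone W :=
    fun x y hxy => (variationOnFromTo.sub_self_monotoneOn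
      hϱbv.locallyBoundedVariationOn h0mem) (hclmem x) (hclmem y) (hclmono hxy)
  have hϱh_eq : ∀ x, ϱh x = V x - W x := by
    intro x; simp [hϱh_def, hV_def, hW_def]
  have hϱh_meas : Measurable ϱh := by
    have : ϱh = fun x => V x - W x := funext hϱh_eq
    rw [this]; exact hVmono.measurable.sub hWmono.measurable
  -- bound for the kernel
  obtain ⟨Mϱ, hMϱ0, hMϱ⟩ : ∃ M : ℝ, 0 ≤ M ∧ ∀ x, |ϱh x| ≤ M := by
    refine ⟨max |V 0| |V dbar| + max |W 0| |W dbar|, by positivity, ?_⟩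
    intro x
    have hVx : V 0 ≤ V x ∧ V x ≤ V dbar := by
      have h1 : V x = V (cl x) := by
        simp only [hV_def]; rw [hcleq _ (hclmem x)]
      exact ⟨h1 ▸ hVmono (hclmem x).1, h1 ▸ hVmono (hclmem x).2⟩
    have hWx : W 0 ≤ W x ∧ W x ≤ W dbar := by
      have h1 : W x = W (cl x) := by
        simp only [hW_def]; rw [hcleq _ (hclmem x)]
      exact ⟨h1 ▸ hWmono (hclmem x).1, h1 ▸ hWmono (hclmem x).2⟩
    calc |ϱh x| = |V x - W x| := by rw [hϱh_eq]
    _ ≤ |V x| + |W x| := abs_sub _ _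
    _ ≤ max |V 0| |V dbar| + max |W 0| |W dbar| :=
        add_le_add (abs_le_max_abs_abs hVx.1 hVx.2) (abs_le_max_abs_abs hWx.1 hWx.2)
  -- flipping convolution-type integrals to the clamped kernel
  have hflip : ∀ (f : ℝ → ℝ) (t : ℝ),
      (∫ s in (t - dbar)..t, ϱ (t - s) * f s) = ∫ r in (0:ℝ)..dbar, ϱh r * f (t - r) := by
    intro f t
    have h1 : EqOn (fun s => ϱ (t - s) * f s)
        (fun s => (fun r => ϱh r * f (t - r)) (t - s)) (uIcc (t - dbar) t) := by
      intro s hs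
      rw [uIcc_of_le (by linarith)] at hs
      have h2 : t - s ∈ Icc (0:ℝ) dbar := ⟨by linarith [hs.2], by linarith [hs.1]⟩
      simp only
      rw [hϱh_agree _ h2, sub_sub_cancel]
    rw [intervalIntegral.integral_congr h1,
      intervalIntegral.integral_comp_sub_left (fun r => ϱh r * f (t - r)) t,
      sub_self, sub_sub_cancel]
  -- measurability of Ifun
  set S : Set (ℝ × ℝ) := {p : ℝ × ℝ | 0 < p.1 ∧ A p.1 ≤ p.2} with hS_def
  have hSmeas : MeasurableSet S :=
    ((isOpen_lt continuous_const continuous_fst).measurableSet).inter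
      ((isClosed_le (hAc.comp continuous_fst) continuous_snd).measurableSet)
  set w : ℝ × ℝ → ℝ := S.indicator (fun p => v p.1 p.2) with hw_def
  have hwmeas : Measurable w := measurable_indicator_of_continuousOn' hSmeas hvc
  have hIw : ∀ t, 0 < t → Ifun v A t = 1 - ∫ x, w (t, x) := by
    intro t ht
    have h1 : (fun x => w (t, x)) = (Ici (A t)).indicator (v t) := by
      funext x
      by_cases hx : A t ≤ x
      · rw [Set.indicator_of_mem (mem_Ici.2 hx), hw_def,
          Set.indicator_of_mem (show (t,x) ∈ S from ⟨ht, hx⟩)]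
      · rw [Set.indicator_of_notMem (by simpa using hx), hw_def,
          Set.indicator_of_notMem (fun hmem => hx hmem.2)]
    rw [Ifun, if_neg (not_le.2 ht)]
    congr 1
    calc ∫ x in Ici (A t), v t x = ∫ x, (Ici (A t)).indicator (v t) x :=
          (integral_indicator measurableSet_Ici).symm
    _ = ∫ x, w (t, x) := by rw [← h1]
  have hIfun_meas : Measurable (Ifun v A) := by
    have h1 : Ifun v A = fun t => if t ≤ 0 then 0 else 1 - ∫ x, w (t, x) := by
      funext t
      by_cases ht : t ≤ 0
      · rw [Ifun, if_pos ht, if_pos ht]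
      · rw [if_neg ht]
        exact hIw t (not_le.1 ht)
    rw [h1]
    exact Measurable.ite measurableSet_Iic measurable_const
      (measurable_const.sub hwmeas.stronglyMeasurable.integral_prod_right'.measurable)
  -- the weak formulation with φ = 1
  have hIprim0 : ∀ t, 0 < t → Ifun v A t =
      ∫ s in (0:ℝ)..t, γ s (Cfun ϱ dbar v A s) * (σ s (A s))^2 * v s (A s) := by
    intro t ht
    have hd1 : deriv (fun _ : ℝ => (1:ℝ)) = fun _ => 0 := deriv_const' 1
    have hd2 : deriv (deriv (fun _ : ℝ => (1:ℝ))) = fun _ => 0 := by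
      rw [hd1]; exact deriv_const' 0
    have hbd : ∃ M, ∀ x : ℝ, |(fun _ : ℝ => (1:ℝ)) x| ≤ M ∧
        |deriv (fun _ : ℝ => (1:ℝ)) x| ≤ M ∧
        |deriv (deriv (fun _ : ℝ => (1:ℝ))) x| ≤ M := by
      refine ⟨1, fun x => ?_⟩
      rw [hd2, hd1]
      norm_num
    have h := hweak t ht.le (fun _ => 1) contDiff_const hbd
    simp only [hd1, hd2, deriv_const', zero_mul, mul_zero, mul_one, one_mul, integral_zero,
      intervalIntegral.integral_zero, zero_add, add_zero, integral_const, measure_univ,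
      probReal_univ, smul_eq_mul, zero_sub, neg_mul, intervalIntegral.integral_neg] at h
    rw [Ifun, if_neg (not_le.2 ht)]
    linarith [h]
  -- bounds on Ifun
  have hIle1 : ∀ t, Ifun v A t ≤ 1 := by
    intro t
    rw [Ifun]
    split_ifs with ht
    · norm_num
    · have h0 : 0 ≤ ∫ x in Ici (A t), v t x :=
        setIntegral_nonneg measurableSet_Ici (fun x _ => hv0 t x)
      linarith
  have hIge0 : ∀ t, 0 ≤ Ifun v A t := by
    intro t
    by_cases ht : t ≤ 0
    · rw [Ifun, if_pos ht]
    · have ht' : 0 < t := not_le.1 ht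
      rw [hIprim0 t ht']
      apply intervalIntegral.integral_nonneg ht'.le
      intro u hu
      obtain ⟨K, κγ, hκγ, _, _, hγlb⟩ := hγs t ht'
      exact mul_nonneg (mul_nonneg (hκγ.le.trans (hγlb u hu _)) (sq_nonneg _)) (hv0 _ _)
  -- the function D and the convolution Φ
  set D : ℝ → ℝ := fun u => Ifun v A u - Ifun v A (u - dbar) with hD_def
  have hDmeas : Measurable D :=
    hIfun_meas.sub (hIfun_meas.comp (measurable_id.sub measurable_const))
  have hDbd : ∀ u, |D u| ≤ 1 := by
    intro u
    rw [abs_le]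
    constructor
    · have h1 := hIge0 u; have h2 := hIle1 (u - dbar); simp only [hD_def]; linarith
    · have h1 := hIle1 u; have h2 := hIge0 (u - dbar); simp only [hD_def]; linarith
  set Φ : ℝ → ℝ := fun t => ∫ r in (0:ℝ)..dbar, ϱh r * D (t - r) with hΦ_def
  have hCeq : ∀ t, Cfun ϱ dbar v A t = Φ t := by
    intro t
    have h := hflip D t
    simp only [hD_def] at h
    rw [Cfun]
    simp only [hΦ_def, hD_def]
    exact h
  have hΦIoc : Φ = fun t => ∫ r in Ioc (0:ℝ) dbar, ϱh r * D (t - r) := by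
    funext t
    simp only [hΦ_def]
    exact intervalIntegral.integral_of_le hdbar.le
  have hΦmeas : Measurable Φ := by
    rw [hΦIoc]
    exact (((hϱh_meas.comp measurable_snd).mul
      (hDmeas.comp (measurable_fst.sub measurable_snd))).stronglyMeasurable.integral_prod_right').measurable
  have hΦbd : ∀ t, |Φ t| ≤ Mϱ * dbar := by
    intro t
    have h : ∀ r ∈ Set.uIoc (0:ℝ) dbar, ‖ϱh r * D (t - r)‖ ≤ Mϱ := by
      intro r _
      rw [Real.norm_eq_abs, abs_mul]
      calc |ϱh r| * |D (t - r)| ≤ Mϱ * 1 :=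
            mul_le_mul (hMϱ r) (hDbd _) (abs_nonneg _) hMϱ0
      _ = Mϱ := mul_one _
    have h2 := intervalIntegral.norm_integral_le_of_norm_le_const h
    rw [sub_zero, abs_of_nonneg hdbar.le] at h2
    simpa [hΦ_def, Real.norm_eq_abs] using h2
  -- bound for the coefficient in front of v(s, A_s)
  have hbdd : ∀ T, 0 < T → ∃ CB : ℝ, 0 ≤ CB ∧
      ∀ s ∈ Icc (0:ℝ) T, |γ s (Φ s) * σ s (A s) ^ 2| ≤ CB := by
    intro T hT
    obtain ⟨κσ, Kσ, hκσ, hκKσ, hσLip, hσbd⟩ := hσs T hT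
    obtain ⟨Kγ, κγ, hκγ, hγC1, hγLip, hγlb⟩ := hγs T hT
    have hγ0cont : ContinuousOn (fun s : ℝ => Function.uncurry γ (s, (0:ℝ))) (Icc 0 T) :=
      hγC1.continuousOn.comp ((continuous_id.prodMk continuous_const).continuousOn)
        (fun s hs => ⟨hs, mem_univ _⟩)
    obtain ⟨Cγ, hCγ⟩ := (isCompact_Icc (a := (0:ℝ)) (b := T)).exists_bound_of_continuousOn hγ0cont
    have hCγ0 : 0 ≤ Cγ := le_trans (norm_nonneg _) (hCγ 0 ⟨le_refl _, hT.le⟩)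
    have hKσ0 : 0 ≤ Kσ := hκσ.le.trans hκKσ
    refine ⟨(Cγ + (Real.toNNReal Kγ : ℝ) * (Mϱ * dbar)) * Kσ ^ 2, by positivity, ?_⟩
    intro s hs
    have hγbd : |γ s (Φ s)| ≤ Cγ + (Real.toNNReal Kγ : ℝ) * (Mϱ * dbar) := by
      have hd : dist (γ s (Φ s)) (γ s 0) ≤ (Real.toNNReal Kγ : ℝ) * dist (Φ s) 0 :=
        (hγLip s hs).dist_le_mul (Φ s) 0
      rw [Real.dist_eq, Real.dist_eq, sub_zero] at hd
      have h0 : |γ s 0| ≤ Cγ := hCγ s hs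
      have h1 : |Φ s| ≤ Mϱ * dbar := hΦbd s
      have h2 : (0:ℝ) ≤ (Real.toNNReal Kγ : ℝ) := (Real.toNNReal Kγ).2
      calc |γ s (Φ s)| ≤ |γ s (Φ s) - γ s 0| + |γ s 0| := by
            have := abs_sub_abs_le_abs_sub (γ s (Φ s)) (γ s 0)
            have := abs_add_le (γ s (Φ s) - γ s 0) (γ s 0)
            calc |γ s (Φ s)| = |γ s (Φ s) - γ s 0 + γ s 0| := by ring_nf
            _ ≤ |γ s (Φ s) - γ s 0| + |γ s 0| := abs_add_le _ _
      _ ≤ (Real.toNNReal Kγ : ℝ) * |Φ s| + Cγ := add_le_add hd h0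
      _ ≤ (Real.toNNReal Kγ : ℝ) * (Mϱ * dbar) + Cγ :=
            add_le_add_left (mul_le_mul_of_nonneg_left h1 h2) _
      _ = Cγ + (Real.toNNReal Kγ : ℝ) * (Mϱ * dbar) := by ring
    have hσbd2 : |σ s (A s) ^ 2| ≤ Kσ ^ 2 := by
      rw [abs_of_nonneg (sq_nonneg _)]
      have h1 := (hσbd s hs (A s)).1
      have h2 := (hσbd s hs (A s)).2
      nlinarith [hκσ.le.trans h1]
    rw [abs_mul]
    exact mul_le_mul hγbd hσbd2 (abs_nonneg _) (by positivity)
  -- the candidate derivative I'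
  set I' : ℝ → ℝ := fun s => if s ≤ 0 then 0 else
    v s (A s) * γ s (Cfun ϱ dbar v A s) * σ s (A s) ^ 2 with hI'_def
  have hvAcont : ContinuousOn (fun s => v s (A s)) (Ioi 0) := by
    apply hvc.comp (Continuous.continuousOn (continuous_id.prodMk hAc))
    intro s hs
    exact ⟨hs, le_refl _⟩
  have hγΦmeas : Measurable (fun s => γ s (Φ s)) :=
    hγm.comp (measurable_id.prodMk hΦmeas)
  have hσAmeas : Measurable (fun s => σ s (A s)) :=
    hσm.comp (measurable_id.prodMk hAc.measurable)
  have hI'eq : I' = fun s =>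
      ((Ioi (0:ℝ)).indicator (fun u => v u (A u)) s) * (γ s (Φ s) * σ s (A s) ^ 2) := by
    funext s
    simp only [hI'_def]
    by_cases hs : s ≤ 0
    · rw [if_pos hs, Set.indicator_of_notMem (by simpa using hs), zero_mul]
    · rw [if_neg hs, Set.indicator_of_mem (mem_Ioi.2 (not_le.1 hs)), hCeq]
      ring
  have hI'meas : Measurable I' := by
    rw [hI'eq]
    exact (measurable_indicator_of_continuousOn' measurableSet_Ioi hvAcont).mul
      (hγΦmeas.mul (hσAmeas.pow_const 2))
  -- interval integrability of I'
  have hI'int : ∀ p q : ℝ, IntervalIntegrable I' volume p q := by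
    have hIcc : ∀ T, 0 < T → IntegrableOn I' (Icc (-T) T) := by
      intro T hT
      have h1 : IntegrableOn I' (Icc (-T) 0) := by
        apply (integrableOn_zero (s := Icc (-T) (0:ℝ))).congr_fun ?_ measurableSet_Icc
        intro s hs
        exact ((if_pos hs.2) : I' s = 0).symm
      have h2 : IntegrableOn I' (Ioc 0 T) := by
        obtain ⟨CB, hCB0, hCB⟩ := hbdd T hT
        have hvA : IntegrableOn (fun s => v s (A s)) (Ioc 0 T) :=
          (hvAint T hT).mono_set Ioc_subset_Icc_self
        have h3 : IntegrableOn (fun s => (γ s (Φ s) * σ s (A s) ^ 2) * v s (A s)) (Ioc 0 T) := by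
          apply hvA.bdd_mul (c := CB)
            ((hγΦmeas.mul (hσAmeas.pow_const 2)).aestronglyMeasurable)
          refine (ae_restrict_iff' measurableSet_Ioc).2 (Eventually.of_forall fun s hs => ?_)
          rw [Real.norm_eq_abs]
          exact hCB s (Ioc_subset_Icc_self hs)
        apply h3.congr_fun ?_ measurableSet_Ioc
        intro s hs
        simp only [hI'_def]
        rw [if_neg (not_le.2 hs.1), hCeq]
        ring
      exact (h1.union h2).mono_set (by
        intro x hx
        rcases le_or_gt x 0 with h | h
        · exact Or.inl ⟨hx.1, h⟩
        · exact Or.inr ⟨h, hx.2⟩)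
    intro p q
    rw [intervalIntegrable_iff]
    set T : ℝ := max (max |p| |q|) 1 with hT_def
    have hT : 0 < T := lt_of_lt_of_le one_pos (le_max_right _ _)
    apply (hIcc T hT).mono_set
    have hp : p ∈ Icc (-T) T :=
      ⟨neg_le_of_abs_le ((le_max_left |p| |q|).trans (le_max_left _ _)),
       le_of_abs_le ((le_max_left |p| |q|).trans (le_max_left _ _))⟩
    have hq : q ∈ Icc (-T) T :=
      ⟨neg_le_of_abs_le ((le_max_right |p| |q|).trans (le_max_left _ _)),
       le_of_abs_le ((le_max_right |p| |q|).trans (le_max_left _ _))⟩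
    exact fun x hx => (uIcc_subset_Icc hp hq) (uIoc_subset_uIcc hx)
  -- the master identity: Ifun is the primitive of I'
  have hIfun_prim : ∀ t : ℝ, Ifun v A t = ∫ s in (0:ℝ)..t, I' s := by
    intro t
    rcases le_or_gt t 0 with ht | ht
    · rw [Ifun, if_pos ht]
      symm
      have hEq : EqOn I' (fun _ => (0:ℝ)) (uIcc 0 t) := by
        intro s hs
        rw [uIcc_of_ge ht] at hs
        exact if_pos hs.2
      rw [intervalIntegral.integral_congr hEq, intervalIntegral.integral_zero]
    · rw [hIprim0 t ht]
      apply intervalIntegral.integral_congr_ae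
      filter_upwards with s hs
      rw [uIoc_of_le ht.le] at hs
      simp only [hI'_def]
      rw [if_neg (not_le.2 hs.1)]
      ring
  have hIcont : Continuous (Ifun v A) := by
    rw [show Ifun v A = fun u => ∫ s in (0:ℝ)..u, I' s from funext hIfun_prim]
    exact intervalIntegral.continuous_primitive hI'int 0
  have hDcont : Continuous D := by
    have : Continuous fun u => Ifun v A (u - dbar) := hIcont.comp (continuous_sub_right dbar)
    exact hIcont.sub this
  have hΦcont : Continuous Φ := by
    rw [hΦIoc]
    apply continuous_of_dominated (bound := fun _ => Mϱ * 1)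
    · intro t
      exact ((hϱh_meas.mul (hDmeas.comp (measurable_const.sub measurable_id))).aestronglyMeasurable)
    · intro t
      refine Eventually.of_forall fun r => ?_
      rw [Real.norm_eq_abs, abs_mul]
      exact mul_le_mul (hMϱ r) (hDbd _) (abs_nonneg _) hMϱ0
    · exact (integrableOn_const_iff (by simp)).2 (Or.inr measure_Ioc_lt_top)
    · refine Eventually.of_forall fun r => ?_
      exact continuous_const.mul (hDcont.comp (continuous_sub_right r))
  have hCc : Continuous (Cfun ϱ dbar v A) := by
    rw [show Cfun ϱ dbar v A = Φ from funext hCeq]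
    exact hΦcont
  have hI'contAt : ∀ t, 0 < t → ContinuousAt I' t := by
    intro t ht
    have hvAat : ContinuousAt (fun s => v s (A s)) t :=
      hvAcont.continuousAt (Ioi_mem_nhds ht)
    obtain ⟨Kγ, κγ, hκγ, hγC1, hγLip, hγlb⟩ := hγs (t+1) (by linarith)
    have hγat : ContinuousAt (fun s => γ s (Cfun ϱ dbar v A s)) t := by
      have h1 : ContinuousAt (Function.uncurry γ) (t, Cfun ϱ dbar v A t) :=
        hγC1.continuousOn.continuousAt
          (prod_mem_nhds (Icc_mem_nhds ht (by linarith)) univ_mem)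
      have h2 : ContinuousAt (fun s : ℝ => (s, Cfun ϱ dbar v A s)) t :=
        continuousAt_id.prodMk hCc.continuousAt
      exact ContinuousAt.comp (g := Function.uncurry γ)
        (f := fun s : ℝ => (s, Cfun ϱ dbar v A s)) h1 h2
    obtain ⟨κσ, Kσ, hκσ, hκKσ, hσLip, hσbd⟩ := hσs (t+1) (by linarith)
    have hσat : ContinuousAt (fun s => σ s (A s)) t := by
      have h1 : ContinuousAt (Function.uncurry σ) (t, A t) :=
        hσLip.continuousOn.continuousAt
          (prod_mem_nhds (Icc_mem_nhds ht (by linarith)) univ_mem)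
      have h2 : ContinuousAt (fun s : ℝ => (s, A s)) t :=
        continuousAt_id.prodMk hAc.continuousAt
      exact ContinuousAt.comp (g := Function.uncurry σ)
        (f := fun s : ℝ => (s, A s)) h1 h2
    have hprod : ContinuousAt
        (fun s => v s (A s) * γ s (Cfun ϱ dbar v A s) * σ s (A s) ^ 2) t :=
      (hvAat.mul hγat).mul (hσat.pow 2)
    apply hprod.congr
    filter_upwards [Ioi_mem_nhds ht] with s hs
    simp only [hI'_def]
    rw [if_neg (not_le.2 hs)]
  have hIderiv : ∀ t, 0 < t → HasDerivAt (Ifun v A) (I' t) t := by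
    intro t ht
    rw [show Ifun v A = fun u => ∫ s in (0:ℝ)..u, I' s from funext hIfun_prim]
    exact intervalIntegral.integral_hasDerivAt_right (hI'int 0 t)
      hI'meas.stronglyMeasurable.stronglyMeasurableAtFilter (hI'contAt t ht)
  -- the kernel with compact support and its discontinuity set
  set k : ℝ → ℝ := (Ioc (0:ℝ) dbar).indicator ϱh with hk_def
  have hkmeas : Measurable k := hϱh_meas.indicator measurableSet_Ioc
  have hkbd : ∀ x, |k x| ≤ Mϱ := by
    intro x
    simp only [hk_def, Set.indicator]
    split_ifs
    · exact hMϱ x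
    · simpa using hMϱ0
  have hkbad : ∃ Bad : Set ℝ, Bad.Countable ∧ ∀ x ∉ Bad, ContinuousAt k x := by
    refine ⟨({0, dbar} : Set ℝ) ∪ ({x | ¬ ContinuousAt V x} ∪ {x | ¬ ContinuousAt W x}),
      (((countable_singleton dbar).insert 0).union
        (hVmono.countable_not_continuousAt.union hWmono.countable_not_continuousAt)), ?_⟩
    intro x hx
    simp only [mem_union, mem_insert_iff, mem_singleton_iff, mem_setOf_eq, not_or,
      not_not] at hx
    obtain ⟨⟨hx0, hxd⟩, hVc, hWc⟩ := hx
    have hϱhat : ContinuousAt ϱh x := by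
      rw [show ϱh = fun y => V y - W y from funext hϱh_eq]
      exact hVc.sub hWc
    rcases lt_trichotomy x 0 with hlt | heq | hgt
    · apply continuousAt_const.congr
      filter_upwards [Iio_mem_nhds hlt] with y hy
      rw [hk_def, Set.indicator_of_notMem (fun hmem => absurd hmem.1 (not_lt.2 (le_of_lt hy)))]
    · exact absurd heq hx0
    · rcases lt_trichotomy x dbar with hlt2 | heq2 | hgt2
      · apply hϱhat.congr
        filter_upwards [Ioo_mem_nhds hgt hlt2] with y hy
        have hym : y ∈ Ioc (0:ℝ) dbar := ⟨hy.1, hy.2.le⟩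
        rw [hk_def, Set.indicator_of_mem hym]
      · exact absurd heq2 hxd
      · apply continuousAt_const.congr
        filter_upwards [Ioi_mem_nhds hgt2] with y hy
        rw [hk_def, Set.indicator_of_notMem (fun hmem => absurd hmem.2 (not_le.2 hy))]
  -- the key convolution lemma
  have key : ∀ E : ℝ → ℝ, Measurable E → (∀ p q : ℝ, IntervalIntegrable E volume p q) →
      Continuous (fun s => ∫ r in (0:ℝ)..dbar, ϱh r * E (s - r)) ∧
      ∀ t : ℝ, HasDerivAt
        (fun u => ∫ r in (0:ℝ)..dbar, ϱh r * (∫ x in (0:ℝ)..(u - r), E x))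
        (∫ r in (0:ℝ)..dbar, ϱh r * E (t - r)) t := by
    intro E hEm hEint
    obtain ⟨Bad, hBadc, hBadcont⟩ := hkbad
    have hrep : ∀ s : ℝ,
        (∫ r in (0:ℝ)..dbar, ϱh r * E (s - r)) = ∫ u : ℝ, k (s - u) * E u := by
      intro s
      rw [intervalIntegral.integral_of_le hdbar.le, ← integral_indicator measurableSet_Ioc,
        ← integral_sub_left_eq_self
          (fun r => (Ioc (0:ℝ) dbar).indicator (fun r' => ϱh r' * E (s - r')) r) volume s]
      congr 1
      funext u
      by_cases h : s - u ∈ Ioc (0:ℝ) dbar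
      · rw [Set.indicator_of_mem h, hk_def, Set.indicator_of_mem h, sub_sub_cancel]
      · rw [Set.indicator_of_notMem h, hk_def, Set.indicator_of_notMem h, zero_mul]
    have hcE : Continuous (fun s => ∫ r in (0:ℝ)..dbar, ϱh r * E (s - r)) := by
      rw [show (fun s => ∫ r in (0:ℝ)..dbar, ϱh r * E (s - r))
          = fun s => ∫ u : ℝ, k (s - u) * E u from funext hrep]
      rw [continuous_iff_continuousAt]
      intro t₀
      apply tendsto_integral_filter_of_dominated_convergence
        (bound := (Icc (t₀ - 1 - dbar) (t₀ + 1)).indicator (fun u => Mϱ * |E u|))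
      · refine Eventually.of_forall fun s => ?_
        exact ((hkmeas.comp (measurable_const.sub measurable_id)).mul hEm).aestronglyMeasurable
      · filter_upwards [Metric.ball_mem_nhds t₀ one_pos] with s hs
        refine Eventually.of_forall fun u => ?_
        rcases eq_or_ne (k (s - u)) 0 with h0 | h0
        · rw [h0, zero_mul, norm_zero]
          exact Set.indicator_nonneg (fun y _ => by positivity) u
        · have hmem : s - u ∈ Ioc (0:ℝ) dbar := by
            by_contra hmem
            exact h0 (by rw [hk_def]; exact Set.indicator_of_notMem hmem _)
          have hd : |s - t₀| < 1 := by
            rw [Metric.mem_ball, Real.dist_eq] at hs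
            exact hs
          have habs := abs_lt.1 hd
          have humem : u ∈ Icc (t₀ - 1 - dbar) (t₀ + 1) := by
            constructor
            · have := hmem.2; linarith
            · have := hmem.1; linarith
          rw [Set.indicator_of_mem humem, Real.norm_eq_abs, abs_mul]
          exact mul_le_mul (hkbd _) (le_refl _) (abs_nonneg _) hMϱ0
      · apply IntegrableOn.integrable_indicator ?_ measurableSet_Icc
        have h1 : IntervalIntegrable (fun u => Mϱ * |E u|) volume (t₀ - 1 - dbar) (t₀ + 1) :=
          ((hEint _ _).abs).const_mul Mϱ
        exact (intervalIntegrable_iff_integrableOn_Icc_of_le (by linarith [hdbar])).1 h1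
      · have hnull : ∀ᵐ u : ℝ, t₀ - u ∉ Bad := by
          have h2 : {u : ℝ | t₀ - u ∈ Bad} = (fun b => t₀ - b) '' Bad := by
            ext u
            simp only [mem_setOf_eq, mem_image]
            constructor
            · intro h; exact ⟨t₀ - u, h, by ring⟩
            · rintro ⟨bb, hbb, rfl⟩; simpa using hbb
          have h1 : volume {u : ℝ | t₀ - u ∈ Bad} = 0 := by
            rw [h2]; exact (hBadc.image _).measure_zero _
          rw [ae_iff]
          simpa [not_not] using h1
        filter_upwards [hnull] with u hu
        have hk' : ContinuousAt (fun s => k (s - u)) t₀ := by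
          have hgc := hBadcont _ hu
          exact ContinuousAt.comp (g := k) (f := fun s : ℝ => s - u) hgc
            (continuousAt_id.sub continuousAt_const)
        exact (hk'.mul continuousAt_const).tendsto
    refine ⟨hcE, ?_⟩
    intro t
    -- interval integrability of r ↦ ϱh r * (primitive of E at t - r)
    have hPcont : Continuous (fun y : ℝ => ∫ x in (0:ℝ)..y, E x) :=
      intervalIntegral.continuous_primitive hEint 0
    have hPIint : ∀ u : ℝ, IntervalIntegrable
        (fun r => ϱh r * (∫ x in (0:ℝ)..(u - r), E x)) volume 0 dbar := by
      intro u
      obtain ⟨BP, hBP⟩ := (isCompact_Icc (a := (0:ℝ)) (b := dbar)).exists_bound_of_continuousOn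
        ((hPcont.comp (continuous_sub_left u)).continuousOn)
      rw [intervalIntegrable_iff_integrableOn_Ioc_of_le hdbar.le]
      apply Integrable.mono' (integrable_const (Mϱ * BP))
      · exact (hϱh_meas.mul ((hPcont.comp (continuous_sub_left u)).measurable)).aestronglyMeasurable
      · refine (ae_restrict_iff' measurableSet_Ioc).2 (Eventually.of_forall fun r hr => ?_)
        rw [Real.norm_eq_abs, abs_mul]
        have h1 : |∫ x in (0:ℝ)..(u - r), E x| ≤ BP := by
          have := hBP r (Ioc_subset_Icc_self hr)
          simpa [Real.norm_eq_abs] using this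
        exact mul_le_mul (hMϱ r) h1 (abs_nonneg _) hMϱ0
    -- Fubini
    have hswap : ∀ c d : ℝ, c ≤ d →
        (∫ r in (0:ℝ)..dbar, ∫ s in c..d, ϱh r * E (s - r)) =
        ∫ s in c..d, ∫ r in (0:ℝ)..dbar, ϱh r * E (s - r) := by
      intro c d hcd
      have hEtrans : ∀ r : ℝ, IntervalIntegrable (fun s => E (s - r)) volume c d := by
        intro r
        have h1 := (hEint (c - r) (d - r)).comp_sub_right r
        simpa using h1
      simp only [intervalIntegral.integral_of_le hcd, intervalIntegral.integral_of_le hdbar.le]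
      apply MeasureTheory.integral_integral_swap
      have hjm : Measurable (fun p : ℝ × ℝ => ϱh p.1 * E (p.2 - p.1)) :=
        (hϱh_meas.comp measurable_fst).mul (hEm.comp (measurable_snd.sub measurable_fst))
      apply (integrable_prod_iff hjm.aestronglyMeasurable).2
      constructor
      · exact Eventually.of_forall fun r => ((hEtrans r).1).const_mul (ϱh r)
      · set B : ℝ := ∫ x in (c - dbar)..d, |E x| with hB_def
        apply Integrable.mono' (integrable_const (Mϱ * B))
        · exact (hjm.norm.stronglyMeasurable.integral_prod_right').aestronglyMeasurable
        · refine (ae_restrict_iff' measurableSet_Ioc).2 (Eventually.of_forall fun r hr => ?_)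
          have hnn : 0 ≤ ∫ s in Ioc c d, ‖ϱh r * E (s - r)‖ :=
            integral_nonneg fun s => norm_nonneg _
          rw [Real.norm_of_nonneg hnn]
          have h1 : (∫ s in Ioc c d, ‖ϱh r * E (s - r)‖)
              = |ϱh r| * ∫ s in Ioc c d, |E (s - r)| := by
            simp only [Real.norm_eq_abs, abs_mul]
            exact integral_const_mul _ _
          rw [h1]
          have h2 : (∫ s in Ioc c d, |E (s - r)|) ≤ B := by
            have h3 : (∫ s in Ioc c d, |E (s - r)|) = ∫ x in (c - r)..(d - r), |E x| := by
              rw [← intervalIntegral.integral_of_le hcd,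
                intervalIntegral.integral_comp_sub_right (fun x => |E x|) r]
            rw [h3, hB_def]
            apply intervalIntegral.integral_mono_interval (by linarith [hr.2])
              (by linarith) (by linarith [hr.1.le])
            · exact Eventually.of_forall fun x => abs_nonneg _
            · exact (hEint _ _).abs
          exact mul_le_mul (hMϱ r) h2 (integral_nonneg fun s => abs_nonneg _) hMϱ0
    -- the primitive identity
    have hprim : ∀ u : ℝ,
        (∫ r in (0:ℝ)..dbar, ϱh r * (∫ x in (0:ℝ)..(u - r), E x)) =
        (∫ r in (0:ℝ)..dbar, ϱh r * (∫ x in (0:ℝ)..((0:ℝ) - r), E x))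
          + ∫ s in (0:ℝ)..u, ∫ r in (0:ℝ)..dbar, ϱh r * E (s - r) := by
      intro u
      have h1 : (∫ r in (0:ℝ)..dbar, ϱh r * (∫ x in (0:ℝ)..(u - r), E x))
          - (∫ r in (0:ℝ)..dbar, ϱh r * (∫ x in (0:ℝ)..((0:ℝ) - r), E x))
          = ∫ r in (0:ℝ)..dbar,
              ϱh r * ((∫ x in (0:ℝ)..(u - r), E x) - ∫ x in (0:ℝ)..((0:ℝ) - r), E x) := by
        rw [← intervalIntegral.integral_sub (hPIint u) (hPIint 0)]
        apply intervalIntegral.integral_congr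
        intro r _
        simp only
        ring
      have h2 : ∀ r : ℝ, ((∫ x in (0:ℝ)..(u - r), E x) - ∫ x in (0:ℝ)..((0:ℝ) - r), E x)
          = ∫ s in (0:ℝ)..u, E (s - r) := by
        intro r
        rw [intervalIntegral.integral_interval_sub_left (hEint 0 (u - r)) (hEint 0 (0 - r)),
          intervalIntegral.integral_comp_sub_right E r]
      have h3 : (∫ r in (0:ℝ)..dbar, ϱh r * (∫ x in (0:ℝ)..(u - r), E x))
          - (∫ r in (0:ℝ)..dbar, ϱh r * (∫ x in (0:ℝ)..((0:ℝ) - r), E x))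
          = ∫ r in (0:ℝ)..dbar, ∫ s in (0:ℝ)..u, ϱh r * E (s - r) := by
        rw [h1]
        apply intervalIntegral.integral_congr
        intro r _
        simp only
        rw [h2 r, intervalIntegral.integral_const_mul]
      have h4 : (∫ r in (0:ℝ)..dbar, ∫ s in (0:ℝ)..u, ϱh r * E (s - r))
          = ∫ s in (0:ℝ)..u, ∫ r in (0:ℝ)..dbar, ϱh r * E (s - r) := by
        rcases le_total 0 u with hu | hu
        · exact hswap 0 u hu
        · have h5 := hswap u 0 hu
          calc (∫ r in (0:ℝ)..dbar, ∫ s in (0:ℝ)..u, ϱh r * E (s - r))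
              = ∫ r in (0:ℝ)..dbar, -(∫ s in u..(0:ℝ), ϱh r * E (s - r)) := by
                apply intervalIntegral.integral_congr
                intro r _
                simp only
                rw [intervalIntegral.integral_symm]
          _ = -(∫ r in (0:ℝ)..dbar, ∫ s in u..(0:ℝ), ϱh r * E (s - r)) := by
                rw [intervalIntegral.integral_neg]
          _ = -(∫ s in u..(0:ℝ), ∫ r in (0:ℝ)..dbar, ϱh r * E (s - r)) := by rw [h5]
          _ = ∫ s in (0:ℝ)..u, ∫ r in (0:ℝ)..dbar, ϱh r * E (s - r) := by
                rw [← intervalIntegral.integral_symm]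
      linarith [h3, h4]
    have hfun : (fun u => ∫ r in (0:ℝ)..dbar, ϱh r * (∫ x in (0:ℝ)..(u - r), E x))
        = fun u => (∫ r in (0:ℝ)..dbar, ϱh r * (∫ x in (0:ℝ)..((0:ℝ) - r), E x))
          + ∫ s in (0:ℝ)..u, ∫ r in (0:ℝ)..dbar, ϱh r * E (s - r) := funext hprim
    rw [hfun]
    exact (intervalIntegral.integral_hasDerivAt_right (hcE.intervalIntegrable 0 t)
      (hcE.stronglyMeasurableAtFilter _ _) hcE.continuousAt).const_add _
  -- apply the key lemma
  set EE : ℝ → ℝ := fun x => I' x - I' (x - dbar) with hEE_def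
  have hEEm : Measurable EE := hI'meas.sub (hI'meas.comp (measurable_id.sub measurable_const))
  have hEEint : ∀ p q : ℝ, IntervalIntegrable EE volume p q := by
    intro p q
    apply (hI'int p q).sub
    have h1 := (hI'int (p - dbar) (q - dbar)).comp_sub_right dbar
    simpa using h1
  have hD_prim : ∀ u : ℝ, D u = ∫ x in (0:ℝ)..u, EE x := by
    intro u
    have hshift : IntervalIntegrable (fun x => I' (x - dbar)) volume 0 u := by
      have h1 := (hI'int (0 - dbar) (u - dbar)).comp_sub_right dbar
      simpa using h1
    have h1 : (∫ x in (0:ℝ)..u, I' (x - dbar)) = ∫ x in (0:ℝ)..(u - dbar), I' x := by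
      rw [intervalIntegral.integral_comp_sub_right I' dbar]
      rw [← intervalIntegral.integral_add_adjacent_intervals
        (hI'int (0 - dbar) 0) (hI'int 0 (u - dbar))]
      have h2 : (∫ x in ((0:ℝ) - dbar)..(0:ℝ), I' x) = 0 := by
        have hEq : EqOn I' (fun _ => (0:ℝ)) (uIcc (0 - dbar) 0) := by
          intro x hx
          rw [uIcc_of_le (by linarith)] at hx
          exact if_pos hx.2
        rw [intervalIntegral.integral_congr hEq, intervalIntegral.integral_zero]
      rw [h2, zero_add]
    have h3 : (∫ x in (0:ℝ)..u, EE x)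
        = (∫ x in (0:ℝ)..u, I' x) - ∫ x in (0:ℝ)..u, I' (x - dbar) := by
      simp only [hEE_def]
      exact intervalIntegral.integral_sub (hI'int 0 u) hshift
    rw [h3, h1]
    simp only [hD_def]
    rw [hIfun_prim, hIfun_prim]
  obtain ⟨hC'cont, hC'deriv⟩ := key EE hEEm hEEint
  obtain ⟨hA'cont0, hΨderiv⟩ := key I' hI'meas hI'int
  have hCrepr : Cfun ϱ dbar v A
      = fun u => ∫ r in (0:ℝ)..dbar, ϱh r * ∫ x in (0:ℝ)..(u - r), EE x := by
    funext u
    rw [hCeq]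
    simp only [hΦ_def]
    apply intervalIntegral.integral_congr
    intro r _
    simp only
    rw [hD_prim]
  have hCder : ∀ t : ℝ,
      HasDerivAt (Cfun ϱ dbar v A) (∫ r in (0:ℝ)..dbar, ϱh r * EE (t - r)) t := by
    intro t
    rw [hCrepr]
    exact hC'deriv t
  have hArepr : ∀ t, 0 < t →
      A t = a₀ + α * ∫ r in (0:ℝ)..dbar, ϱh r * ∫ x in (0:ℝ)..(t - r), I' x := by
    intro t ht
    rw [hAeq t ht, hflip (Ifun v A) t]
    congr 1
    congr 1
    apply intervalIntegral.integral_congr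
    intro r _
    simp only
    rw [hIfun_prim]
  have hAder : ∀ t, 0 < t →
      HasDerivAt A (α * ∫ r in (0:ℝ)..dbar, ϱh r * I' (t - r)) t := by
    intro t ht
    have h1 : HasDerivAt
        (fun u => a₀ + α * ∫ r in (0:ℝ)..dbar, ϱh r * ∫ x in (0:ℝ)..(u - r), I' x)
        (α * ∫ r in (0:ℝ)..dbar, ϱh r * I' (t - r)) t :=
      ((hΨderiv t).const_mul α).const_add a₀
    apply h1.congr_of_eventuallyEq
    filter_upwards [Ioi_mem_nhds ht] with u hu
    exact hArepr u hu
  -- final assembly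
  refine ⟨I', fun s => ∫ r in (0:ℝ)..dbar, ϱh r * EE (s - r),
    fun t => α * ∫ r in (0:ℝ)..dbar, ϱh r * I' (t - r),
    fun s hs => if_pos hs, ?_, hC'cont.continuousOn, ?_, ?_⟩
  · exact fun t ht => (hI'contAt t ht).continuousWithinAt
  · exact (continuous_const.mul hA'cont0).continuousOn
  · intro t ht
    refine ⟨hIderiv t ht, hCder t, hAder t ht, ?_, ?_⟩
    · simp only [hI'_def]
      rw [if_neg (not_le.2 ht)]
    · rw [hflip I' t]
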